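/- Let g_1,...,g_N ∈ L²(S²;ℂ), σ_n = ‖g_n‖², σ = ‖Σ g_n‖² > 0, R_n = σ_n/σ. If max_n R_n = 1/N², then R_n = 1/N² for every n = 1,...,N. -/

import Mathlib

open MeasureTheory Metric Finset
open scoped InnerProductSpace

noncomputable section

/-- The unit sphere `S²` in `ℝ³`. -/
abbrev S2 := Metric.sphere (0 : EuclideanSpace ℝ (Fin 3)) 1

/-- The surface measure on the unit sphere `S²` (total mass `4π`). -/
def μS : Measure S2 := MeasureTheory.volume.toSphere

lemma lp_coeFn_sum_ae {ι : Type*} (s : Finset ι) (f : ι → Lp ℂ 2 μS) :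
    ⇑(∑ i ∈ s, f i) =ᵐ[μS] fun a => ∑ i ∈ s, (f i) a := by
  classical
  induction s using Finset.induction with
  | empty => simp only [Finset.sum_empty]; exact MeasureTheory.Lp.coeFn_zero ℂ 2 μS
  | @insert i s hi ih =>
    rw [Finset.sum_insert hi]
    filter_upwards [MeasureTheory.Lp.coeFn_add (f i) (∑ j ∈ s, f j), ih] with a h1 h2
    rw [h1]
    simp only [Pi.add_apply, h2]
    rw [Finset.sum_insert hi]

lemma norm_toLp_sq (f : S2 → ℂ) (hf : MemLp f 2 μS) :
    ‖hf.toLp f‖ ^ 2 = ∫ x, ‖f x‖ ^ 2 ∂μS := by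
  have h1 : (⟪hf.toLp f, hf.toLp f⟫_ℂ) = ((‖hf.toLp f‖ : ℂ)) ^ 2 :=
    inner_self_eq_norm_sq_to_K _
  rw [MeasureTheory.L2.inner_def] at h1
  have h2 : ∫ a, ⟪(hf.toLp f : S2 →₂[μS] ℂ) a, (hf.toLp f : S2 →₂[μS] ℂ) a⟫_ℂ ∂μS
      = ∫ a, ((‖f a‖ ^ 2 : ℝ) : ℂ) ∂μS := by
    refine integral_congr_ae ?_
    filter_upwards [hf.coeFn_toLp] with a ha
    rw [ha, inner_self_eq_norm_sq_to_K]
    norm_cast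
  have h3 : ∫ a, ((‖f a‖ ^ 2 : ℝ) : ℂ) ∂μS = ((∫ a, ‖f a‖ ^ 2 ∂μS : ℝ) : ℂ) :=
    integral_ofReal
  rw [h2, h3] at h1
  exact_mod_cast congrArg Complex.re h1.symm

/-- If the maximal ratio `R_n = σ_n/σ` equals `1/N²`, then every ratio
equals `1/N²`. -/
theorem max_ratio_eq_implies_all (N : ℕ) (hN : 1 ≤ N)
    (g : Fin N → S2 → ℂ) (hg : ∀ n, MemLp (g n) 2 μS)
    (σn : Fin N → ℝ) (hσn : ∀ n, σn n = ∫ x, ‖g n x‖ ^ 2 ∂μS)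
    (σ : ℝ) (hσ : σ = ∫ x, ‖∑ n, g n x‖ ^ 2 ∂μS) (hσpos : 0 < σ)
    (Rmax : ℝ) (hRmax : IsGreatest (Set.range fun n => σn n / σ) Rmax)
    (hmax : Rmax = 1 / (N : ℝ) ^ 2) :
    ∀ n, σn n / σ = 1 / (N : ℝ) ^ 2 := by
  have hNpos : (0 : ℝ) < N := by exact_mod_cast hN
  set F : Fin N → (Lp ℂ 2 μS) := fun n => (hg n).toLp (g n) with hF
  have hsum : MemLp (fun x => ∑ n, g n x) 2 μS :=
    memLp_finset_sum Finset.univ (fun n _ => hg n)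
  have hae : ∀ᵐ a ∂μS, ∀ n, (F n : S2 → ℂ) a = g n a :=
    ae_all_iff.2 fun n => (hg n).coeFn_toLp
  -- σ = ‖∑ F n‖²
  have hσeq : σ = ‖∑ n, F n‖ ^ 2 := by
    have hts : hsum.toLp _ = ∑ n, F n := by
      refine MeasureTheory.Lp.ext ?_
      filter_upwards [hsum.coeFn_toLp,
        lp_coeFn_sum_ae Finset.univ F, hae] with a h1 h2 h3
      rw [h1, h2]
      exact Finset.sum_congr rfl fun n _ => (h3 n).symm
    rw [hσ, ← norm_toLp_sq _ hsum, hts]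
  have hσn' : ∀ n, σn n = ‖F n‖ ^ 2 := fun n => by
    rw [hσn n, ← norm_toLp_sq _ (hg n)]
  have hσnn : ∀ n, 0 ≤ σn n := fun n => (hσn' n) ▸ sq_nonneg _
  -- upper bound on each σn
  have hub : ∀ n, σn n ≤ σ / (N : ℝ) ^ 2 := by
    intro n
    have : σn n / σ ≤ Rmax := hRmax.2 ⟨n, rfl⟩
    rw [hmax] at this
    rw [le_div_iff₀ (by positivity : (0:ℝ) < (N:ℝ)^2)]
    rw [div_le_div_iff₀ hσpos (by positivity)] at this
    linarith [this]
  -- sqrt bounds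
  have hFle : ∀ n, ‖F n‖ ≤ Real.sqrt σ / N := by
    intro n
    have h1 : ‖F n‖ ^ 2 ≤ (Real.sqrt σ / N) ^ 2 := by
      rw [div_pow, Real.sq_sqrt hσpos.le]
      exact (hσn' n) ▸ hub n
    have h2 := Real.sqrt_le_sqrt h1
    rwa [Real.sqrt_sq (norm_nonneg _), Real.sqrt_sq (by positivity)] at h2
  have hs : Real.sqrt σ = ‖∑ n, F n‖ := by
    rw [hσeq, Real.sqrt_sq (norm_nonneg _)]
  have hcs : ∑ _n : Fin N, (Real.sqrt σ / N) = Real.sqrt σ := by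
    rw [Finset.sum_const, Finset.card_univ, Fintype.card_fin, nsmul_eq_mul]
    field_simp
  have hlow : Real.sqrt σ ≤ ∑ n, ‖F n‖ := hs ▸ norm_sum_le _ _
  have hall : ∀ n, ‖F n‖ = Real.sqrt σ / N := by
    intro n
    by_contra hne
    have hlt : ‖F n‖ < Real.sqrt σ / N := lt_of_le_of_ne (hFle n) hne
    have : ∑ m, ‖F m‖ < ∑ _m : Fin N, (Real.sqrt σ / N) :=
      Finset.sum_lt_sum (fun m _ => hFle m) ⟨n, Finset.mem_univ n, hlt⟩
    rw [hcs] at this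
    linarith
  intro n
  have : σn n = σ / (N : ℝ) ^ 2 := by
    rw [hσn' n, hall n, div_pow, Real.sq_sqrt hσpos.le]
  rw [this]
  field_simp

end
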